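/- Let σ₀ > 0, δ ∈ (0, π/2). Fix ω ∈ (0, 2π), set c₁ := cos(ω/2), c₂ := sin(ω/2), and fix μ > 0. There exists a constant C = C(ω, μ, δ) such that for every s ∈ 𝒮 and every continuously differentiable g : [−1,1] → ℂ, the angular-derivative jump N(r) := −( g'(r c₁) − g'(−r c₁) ) c₂ e^{−s μ c₂ r} − s μ c₁ ( g(r c₁) − g(−r c₁) ) e^{−s μ c₂ r} satisfies ∫₀¹ |N(r)|² dr ≤ C · ∫_{−1}^{1} |g'(τ)|² dτ. -/

import Mathlib

open Real Complex MeasureTheory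

section Helpers

lemma integrableOn_of_bdd {f : ℝ → ℝ} {s : Set ℝ} (hs : MeasurableSet s) (hvol : volume s < ⊤)
    (hf : AEStronglyMeasurable f (volume.restrict s)) {M : ℝ} (hM : ∀ x ∈ s, |f x| ≤ M) :
    IntegrableOn f s := by
  apply Integrable.mono' (g := fun _ => M) (integrableOn_const hvol.ne) hf
  exact (ae_restrict_iff' hs).2 (ae_of_all _ fun x hx => by simpa using hM x hx)

lemma cs_aux {f : ℝ → ℝ} {x y : ℝ} (hxy : x ≤ y) (hf : ContinuousOn f (Set.Icc x y))
    (hf0 : ∀ t ∈ Set.Icc x y, 0 ≤ f t) :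
    (∫ t in Set.Ioc x y, f t) ^ 2 ≤ (y - x) * ∫ t in Set.Ioc x y, f t ^ 2 := by
  set μ := volume.restrict (Set.Ioc x y) with hμ
  haveI : IsFiniteMeasure μ := ⟨by
    rw [hμ, Measure.restrict_apply_univ, Real.volume_Ioc]; exact ENNReal.ofReal_lt_top⟩
  obtain ⟨M, hM⟩ := isCompact_Icc.exists_bound_of_continuousOn hf
  have hmeas : AEStronglyMeasurable f μ :=
    (hf.mono Set.Ioc_subset_Icc_self).aestronglyMeasurable measurableSet_Ioc
  have hmem : MemLp f (ENNReal.ofReal 2) μ := by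
    refine MemLp.of_bound hmeas M ?_
    exact (ae_restrict_iff' measurableSet_Ioc).2
      (ae_of_all _ fun t ht => hM t (Set.Ioc_subset_Icc_self ht))
  have hone : MemLp (fun _ : ℝ => (1 : ℝ)) (ENNReal.ofReal 2) μ := memLp_const 1
  have hpq : (2 : ℝ).HolderConjugate 2 := Real.HolderConjugate.two_two
  have h0 : 0 ≤ᵐ[μ] f := (ae_restrict_iff' measurableSet_Ioc).2
    (ae_of_all _ fun t ht => hf0 t (Set.Ioc_subset_Icc_self ht))
  have := MeasureTheory.integral_mul_le_Lp_mul_Lq_of_nonneg hpq h0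
    (ae_of_all _ fun _ => zero_le_one) hmem hone
  simp only [mul_one, one_pow] at this
  have h2 : ∀ t : ℝ, f t ^ (2 : ℝ) = f t ^ 2 := fun t => by
    rw [show (2:ℝ) = ((2:ℕ):ℝ) by norm_num, Real.rpow_natCast]
  have h1 : ((1 : ℝ)) ^ (2 : ℝ) = 1 := by norm_num
  rw [h1] at this
  simp only [h2] at this
  have hμuniv : ∫ _t, (1 : ℝ) ∂μ = y - x := by
    simp [hμ, Real.volume_Ioc, ENNReal.toReal_ofReal (by linarith : (0:ℝ) ≤ y - x), hxy]
  rw [hμuniv] at this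
  have hA : 0 ≤ ∫ t, f t ∂μ := integral_nonneg_of_ae h0
  have hB : 0 ≤ ∫ t, f t ^ 2 ∂μ := integral_nonneg fun t => sq_nonneg _
  have hC : (0:ℝ) ≤ y - x := by linarith
  calc (∫ t, f t ∂μ) ^ 2 ≤ ((∫ t, f t ^ 2 ∂μ) ^ ((1:ℝ)/2) * (y - x) ^ ((1:ℝ)/2)) ^ 2 := by
        apply pow_le_pow_left₀ hA this
    _ = (y - x) * ∫ t, f t ^ 2 ∂μ := by
        rw [mul_pow, ← Real.rpow_natCast (_ ^ ((1:ℝ)/2)) 2, ← Real.rpow_natCast (_ ^ ((1:ℝ)/2)) 2,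
          ← Real.rpow_mul hB, ← Real.rpow_mul hC]
        norm_num
        ring

lemma exp_int_aux {a : ℝ} (ha : 0 < a) :
    ∫ r in Set.Ioo (0:ℝ) 1, r * Real.exp (-(2 * a * r)) ≤ 1 / (4 * a ^ 2) := by
  have ha' : a ≠ 0 := ne_of_gt ha
  set F : ℝ → ℝ := fun r => -((r/(2*a) + 1/(4*a^2)) * Real.exp (-(2*a*r))) with hF
  have hderiv : ∀ r ∈ Set.uIcc (0:ℝ) 1, HasDerivAt F (r * Real.exp (-(2*a*r))) r := by
    intro r _
    have h1 : HasDerivAt (fun r : ℝ => r/(2*a) + 1/(4*a^2)) (1/(2*a)) r := by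
      have := ((hasDerivAt_id r).div_const (2*a)).add_const (1/(4*a^2))
      simpa using this
    have h2 : HasDerivAt (fun r : ℝ => Real.exp (-(2*a*r))) (Real.exp (-(2*a*r)) * (-(2*a))) r := by
      have : HasDerivAt (fun r : ℝ => -(2*a*r)) (-(2*a)) r := by
        exact (((hasDerivAt_id r).const_mul (2*a)).neg).congr_deriv (by ring)
      exact this.exp
    have := (h1.mul h2).neg
    exact this.congr_deriv (by field_simp; ring)
  have hint : IntervalIntegrable (fun r : ℝ => r * Real.exp (-(2*a*r))) volume 0 1 :=
    (continuous_id.mul (((continuous_const.mul continuous_id).neg).rexp)).intervalIntegrable 0 1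
  have key : ∫ r in (0:ℝ)..1, r * Real.exp (-(2*a*r)) = F 1 - F 0 :=
    intervalIntegral.integral_eq_sub_of_hasDerivAt hderiv hint
  have h01 : (0:ℝ) ≤ 1 := zero_le_one
  rw [← MeasureTheory.integral_Ioc_eq_integral_Ioo, ← intervalIntegral.integral_of_le h01, key]
  have hexp : 0 < Real.exp (-(2*a*1)) := Real.exp_pos _
  have hc : 0 ≤ (1/(2*a) + 1/(4*a^2)) := by positivity
  simp only [hF]
  have hF0 : -((0/(2*a) + 1/(4*a^2)) * Real.exp (-(2*a*0))) = -(1/(4*a^2)) := by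
    norm_num
  rw [hF0]
  nlinarith [mul_nonneg hc hexp.le]

lemma cov_aux {F : ℝ → ℝ} (hF0 : ∀ x, 0 ≤ F x) (hFi : IntegrableOn F (Set.Ioo (-1:ℝ) 1))
    {e : ℝ} (he : e ≠ 0) (he1 : |e| < 1) :
    ∫ r in Set.Ioo (0:ℝ) 1, F (r * e) ≤ (1/|e|) * ∫ τ in Set.Ioo (-1:ℝ) 1, F τ := by
  have h01 : (0:ℝ) ≤ 1 := zero_le_one
  have hL : ∫ r in Set.Ioo (0:ℝ) 1, F (r * e)
      = e⁻¹ • ∫ x in (0:ℝ)..e, F x := by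
    rw [← MeasureTheory.integral_Ioc_eq_integral_Ioo, ← intervalIntegral.integral_of_le h01]
    rw [intervalIntegral.integral_comp_mul_right F he]
    norm_num
  rw [hL]
  have hnn : 0 ≤ᵐ[volume.restrict (Set.Ioo (-1:ℝ) 1)] F := ae_of_all _ hF0
  rcases lt_or_gt_of_ne he with hneg | hpos
  · have habs : |e| = -e := abs_of_neg hneg
    have hsub : Set.Ioc e 0 ⊆ Set.Ioo (-1:ℝ) 1 := by
      intro t ht
      constructor
      · have : -1 < e := by rw [habs] at he1; linarith
        linarith [ht.1]
      · exact lt_of_le_of_lt ht.2 one_pos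
    have hmono : ∫ x in Set.Ioc e 0, F x ≤ ∫ τ in Set.Ioo (-1:ℝ) 1, F τ :=
      setIntegral_mono_set hFi hnn (HasSubset.Subset.eventuallyLE hsub)
    rw [intervalIntegral.integral_symm, intervalIntegral.integral_of_le hneg.le]
    rw [smul_eq_mul, habs]
    have h1 : e⁻¹ * -(∫ x in Set.Ioc e 0, F x) = (1/(-e)) * ∫ x in Set.Ioc e 0, F x := by
      have hne : -e ≠ 0 := by intro h; exact he (by linarith [neg_eq_zero.1 h])
      field_simp
    rw [h1]
    have hme : 0 < -e := neg_pos.2 hneg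
    have hpos' : 0 < 1/(-e) := by positivity
    exact mul_le_mul_of_nonneg_left hmono hpos'.le
  · have habs : |e| = e := abs_of_pos hpos
    have hsub : Set.Ioc 0 e ⊆ Set.Ioo (-1:ℝ) 1 := by
      intro t ht
      exact ⟨lt_of_lt_of_le (by norm_num) ht.1.le,
        lt_of_le_of_lt ht.2 (by rw [habs] at he1; linarith)⟩
    have hmono : ∫ x in Set.Ioc 0 e, F x ≤ ∫ τ in Set.Ioo (-1:ℝ) 1, F τ :=
      setIntegral_mono_set hFi hnn (HasSubset.Subset.eventuallyLE hsub)
    rw [intervalIntegral.integral_of_le hpos.le, smul_eq_mul, habs]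
    rw [(one_div e).symm]
    have hpos' : 0 < 1/e := by positivity
    exact mul_le_mul_of_nonneg_left hmono hpos'.le

lemma deriv_cont_aux {g : ℝ → ℂ} (hg : ContDiffOn ℝ 1 g (Set.Icc (-1:ℝ) 1)) :
    ContinuousOn (deriv g) (Set.Ioo (-1:ℝ) 1) := by
  have hu : UniqueDiffOn ℝ (Set.Icc (-1:ℝ) 1) := uniqueDiffOn_Icc (by norm_num)
  have hφ : ContinuousOn (derivWithin g (Set.Icc (-1:ℝ) 1)) (Set.Icc (-1:ℝ) 1) :=
    hg.continuousOn_derivWithin hu le_rfl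
  exact (hφ.mono Set.Ioo_subset_Icc_self).congr fun x hx =>
    (derivWithin_of_mem_nhds (Icc_mem_nhds hx.1 hx.2)).symm

lemma deriv_bdd_aux {g : ℝ → ℂ} (hg : ContDiffOn ℝ 1 g (Set.Icc (-1:ℝ) 1)) :
    ∃ M : ℝ, ∀ x ∈ Set.Ioo (-1:ℝ) 1, ‖deriv g x‖ ≤ M := by
  have hu : UniqueDiffOn ℝ (Set.Icc (-1:ℝ) 1) := uniqueDiffOn_Icc (by norm_num)
  have hφ : ContinuousOn (derivWithin g (Set.Icc (-1:ℝ) 1)) (Set.Icc (-1:ℝ) 1) :=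
    hg.continuousOn_derivWithin hu le_rfl
  obtain ⟨M, hM⟩ := isCompact_Icc.exists_bound_of_continuousOn hφ
  refine ⟨M, fun x hx => ?_⟩
  rw [← derivWithin_of_mem_nhds (Icc_mem_nhds hx.1 hx.2)]
  exact hM x (Set.Ioo_subset_Icc_self hx)

lemma hasDeriv_aux {g : ℝ → ℂ} (hg : ContDiffOn ℝ 1 g (Set.Icc (-1:ℝ) 1)) :
    ∀ t ∈ Set.Ioo (-1:ℝ) 1, HasDerivAt g (deriv g t) t := by
  intro t ht
  have : DifferentiableWithinAt ℝ g (Set.Icc (-1:ℝ) 1) t :=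
    (hg.differentiableOn one_ne_zero) t (Set.Ioo_subset_Icc_self ht)
  exact (this.differentiableAt (Icc_mem_nhds ht.1 ht.2)).hasDerivAt

lemma integrable_sq_aux {g : ℝ → ℂ} (hg : ContDiffOn ℝ 1 g (Set.Icc (-1:ℝ) 1)) :
    IntegrableOn (fun τ => ‖deriv g τ‖ ^ 2) (Set.Ioo (-1:ℝ) 1) := by
  obtain ⟨M, hM⟩ := deriv_bdd_aux hg
  have hc : ContinuousOn (fun τ => ‖deriv g τ‖ ^ 2) (Set.Ioo (-1:ℝ) 1) :=
    ((continuous_norm.comp_continuousOn (deriv_cont_aux hg)).pow 2)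
  refine integrableOn_of_bdd measurableSet_Ioo ?_ (hc.aestronglyMeasurable measurableSet_Ioo)
    (M := M ^ 2) fun x hx => ?_
  · rw [Real.volume_Ioo]; exact ENNReal.ofReal_lt_top
  · have h1 : ‖deriv g x‖ ≤ M := by
      exact hM x hx
    have h0 : (0:ℝ) ≤ ‖deriv g x‖ := norm_nonneg _
    rw [_root_.abs_of_nonneg (by positivity)]
    exact pow_le_pow_left₀ h0 h1 2

lemma ftc_cs {g : ℝ → ℂ} (hg : ContDiffOn ℝ 1 g (Set.Icc (-1:ℝ) 1)) {x y : ℝ}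
    (hx : -1 < x) (hxy : x ≤ y) (hy : y < 1) :
    ‖g y - g x‖ ^ 2
      ≤ (y - x) * ∫ τ in Set.Ioo (-1:ℝ) 1, ‖deriv g τ‖ ^ 2 := by
  have hIccsub : Set.Icc x y ⊆ Set.Ioo (-1:ℝ) 1 := fun t ht =>
    ⟨lt_of_lt_of_le hx ht.1, lt_of_le_of_lt ht.2 hy⟩
  have hco : ContinuousOn (deriv g) (Set.Icc x y) := (deriv_cont_aux hg).mono hIccsub
  have hint : IntervalIntegrable (deriv g) volume x y := by
    apply ContinuousOn.intervalIntegrable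
    rwa [Set.uIcc_of_le hxy]
  have hftc : g y - g x = ∫ t in x..y, deriv g t := by
    refine (intervalIntegral.integral_eq_sub_of_hasDerivAt (fun t ht => ?_) hint).symm
    exact hasDeriv_aux hg t (hIccsub (by rwa [Set.uIcc_of_le hxy] at ht))
  have hnorm : ‖g y - g x‖ ≤ ∫ t in Set.Ioc x y, ‖deriv g t‖ := by
    rw [hftc]
    calc ‖∫ t in x..y, deriv g t‖ ≤ ∫ t in x..y, ‖deriv g t‖ :=
          intervalIntegral.norm_integral_le_integral_norm hxy
      _ = ∫ t in Set.Ioc x y, ‖deriv g t‖ := intervalIntegral.integral_of_le hxy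
  have habs0 : (0:ℝ) ≤ ‖g y - g x‖ := norm_nonneg _
  have hcs : (∫ t in Set.Ioc x y, ‖deriv g t‖) ^ 2
      ≤ (y - x) * ∫ t in Set.Ioc x y, ‖deriv g t‖ ^ 2 := by
    refine cs_aux hxy ?_ fun t _ => norm_nonneg _
    exact continuous_norm.comp_continuousOn hco
  have hmono : ∫ t in Set.Ioc x y, ‖deriv g t‖ ^ 2
      ≤ ∫ τ in Set.Ioo (-1:ℝ) 1, ‖deriv g τ‖ ^ 2 := by
    have heq : ∀ t : ℝ, ‖deriv g t‖ ^ 2 = ‖deriv g t‖ ^ 2 := fun t => by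
      rfl
    refine setIntegral_mono_set (integrable_sq_aux hg) (ae_of_all _ fun t => by positivity) ?_
    refine HasSubset.Subset.eventuallyLE fun t ht => ?_
    exact ⟨lt_of_lt_of_le hx ht.1.le, lt_of_le_of_lt ht.2 hy⟩
  calc ‖g y - g x‖ ^ 2 ≤ (∫ t in Set.Ioc x y, ‖deriv g t‖) ^ 2 :=
        pow_le_pow_left₀ habs0 hnorm 2
    _ ≤ (y - x) * ∫ t in Set.Ioc x y, ‖deriv g t‖ ^ 2 := hcs
    _ ≤ (y - x) * ∫ τ in Set.Ioo (-1:ℝ) 1, ‖deriv g τ‖ ^ 2 :=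
        mul_le_mul_of_nonneg_left hmono (by linarith)

lemma add_sq_le_two {u v : ℝ} : (u + v) ^ 2 ≤ 2 * (u ^ 2 + v ^ 2) := by
  nlinarith [sq_nonneg (u - v)]

lemma sq_add_bound {x u v : ℝ} (hx : 0 ≤ x) (h : x ≤ u + v) : x ^ 2 ≤ 2 * u ^ 2 + 2 * v ^ 2 := by
  nlinarith [sq_nonneg (u - v), sq_nonneg (u + v)]

end Helpers

set_option maxHeartbeats 1600000 in
/-- Angular-derivative (normal-derivative) jump estimate at a corner: with `c₁ = cos(ω/2)`,
`c₂ = sin(ω/2)`, `μ > 0`, there is `C = C(ω, μ, δ)` such that for every `s` in the sector `𝒮`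
(any `σ₀ > 0`) and every `C¹` function `g : [-1,1] → ℂ`, the angular-derivative jump
`N(r) = -(g'(r c₁) - g'(-r c₁)) c₂ e^{-s μ c₂ r} - s μ c₁ (g(r c₁) - g(-r c₁)) e^{-s μ c₂ r}`
satisfies `∫₀¹ |N(r)|² dr ≤ C ∫_{-1}^{1} |g'|²`. -/
theorem corner_angular_jump_estimate (δ ω μ : ℝ) (hδ : δ ∈ Set.Ioo 0 (π / 2))
    (hω : ω ∈ Set.Ioo 0 (2 * π)) (hμ : 0 < μ) :
    ∃ C : ℝ, 0 < C ∧
      ∀ (σ₀ : ℝ), 0 < σ₀ →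
      ∀ (s : ℂ), σ₀ < s.re →
        Complex.arg s ∈ Set.Ioo (-(π / 2) + δ) (π / 2 - δ) →
      ∀ g : ℝ → ℂ, ContDiffOn ℝ 1 g (Set.Icc (-1 : ℝ) 1) →
      (∫ r in Set.Ioo (0 : ℝ) 1,
          ‖-((deriv g (r * Real.cos (ω / 2)) - deriv g (-(r * Real.cos (ω / 2)))) *
                Real.sin (ω / 2) * Complex.exp (-s * μ * Real.sin (ω / 2) * r)) -
              s * μ * Real.cos (ω / 2) *
                (g (r * Real.cos (ω / 2)) - g (-(r * Real.cos (ω / 2)))) *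
                Complex.exp (-s * μ * Real.sin (ω / 2) * r)‖ ^ 2) ≤
        C * ∫ τ in Set.Ioo (-1 : ℝ) 1, ‖deriv g τ‖ ^ 2 := by
  classical
  obtain ⟨hδ0, hδπ⟩ := hδ
  obtain ⟨hω0, hω2π⟩ := hω
  have hπ := Real.pi_pos
  set c₁ := Real.cos (ω / 2) with hc₁def
  set c₂ := Real.sin (ω / 2) with hc₂def
  have hc₂ : 0 < c₂ := Real.sin_pos_of_pos_of_lt_pi (by linarith) (by linarith)
  have hsd : 0 < Real.sin δ := Real.sin_pos_of_pos_of_lt_pi hδ0 (by linarith)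
  have hpyth : c₂ ^ 2 + c₁ ^ 2 = 1 := Real.sin_sq_add_cos_sq (ω / 2)
  have hc₁lt : |c₁| < 1 := by
    have : c₁ ^ 2 < 1 := by nlinarith
    exact abs_lt_of_sq_lt_sq (by nlinarith) zero_le_one
  refine ⟨if c₁ = 0 then 1 else 8 * c₂ ^ 2 / |c₁| + |c₁| ^ 3 / (Real.sin δ ^ 2 * c₂ ^ 2),
    ?_, ?_⟩
  · split
    · norm_num
    · next h =>
      have hb : 0 < |c₁| := abs_pos.2 h
      positivity
  intro σ₀ hσ₀ s hs hsarg g hg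
  have hI0 : 0 ≤ ∫ τ in Set.Ioo (-1:ℝ) 1, ‖deriv g τ‖ ^ 2 :=
    setIntegral_nonneg measurableSet_Ioo fun τ _ => by positivity
  by_cases hc0 : c₁ = 0
  · rw [if_pos hc0]
    have hzero : (∫ r in Set.Ioo (0 : ℝ) 1,
        ‖-((deriv g (r * c₁) - deriv g (-(r * c₁))) * ↑c₂ * Complex.exp (-s * ↑μ * ↑c₂ * ↑r)) -
            s * ↑μ * ↑c₁ * (g (r * c₁) - g (-(r * c₁))) * Complex.exp (-s * ↑μ * ↑c₂ * ↑r)‖ ^ 2)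
        = 0 := by
      simp [hc0]
    rw [hzero, one_mul]
    exact hI0
  · rw [if_neg hc0]
    set I := ∫ τ in Set.Ioo (-1:ℝ) 1, ‖deriv g τ‖ ^ 2 with hIdef
    set b := |c₁| with hbdef
    have hb : 0 < b := abs_pos.2 hc0
    have hb1 : b < 1 := hc₁lt
    have hsre : 0 < s.re := lt_trans hσ₀ hs
    have hs0 : s ≠ 0 := fun h => by simp [h] at hsre
    -- |s| sin δ ≤ s.re
    have habs_le : ‖s‖ * Real.sin δ ≤ s.re := by
      have hcosarg : Real.cos (Complex.arg s) = s.re / ‖s‖ := Complex.cos_arg hs0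
      have hargabs : |Complex.arg s| ≤ π / 2 - δ :=
        abs_le.2 ⟨by linarith [hsarg.1], hsarg.2.le⟩
      have h1 : Real.sin δ ≤ Real.cos (Complex.arg s) := by
        rw [← Real.cos_pi_div_two_sub δ, ← Real.cos_abs (Complex.arg s)]
        exact Real.cos_le_cos_of_nonneg_of_le_pi (abs_nonneg _) (by linarith) hargabs
      have h2 : ‖s‖ * Real.sin δ ≤ ‖s‖ * Real.cos (Complex.arg s) :=
        mul_le_mul_of_nonneg_left h1 (norm_nonneg _)
      rw [hcosarg] at h2
      have hne : ‖s‖ ≠ 0 := norm_ne_zero_iff.2 hs0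
      calc ‖s‖ * Real.sin δ ≤ ‖s‖ * (s.re / ‖s‖) := h2
        _ = s.re := by field_simp
    set a := s.re * (μ * c₂) with hadef
    have ha : 0 < a := by rw [hadef]; positivity
    set AS := ‖s‖ with hASdef
    have hAS0 : 0 ≤ AS := norm_nonneg _
    clear_value I a AS
    obtain ⟨M, hM⟩ := deriv_bdd_aux hg
    have hM0 : 0 ≤ M := le_trans (norm_nonneg _) (hM 0 (by norm_num))
    -- maps facts
    have hmap : ∀ r ∈ Set.Ioo (0:ℝ) 1, |r * c₁| < 1 := by
      intro r hr
      rw [abs_mul, abs_of_pos hr.1]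
      calc r * |c₁| ≤ 1 * |c₁| := mul_le_mul_of_nonneg_right hr.2.le (abs_nonneg _)
        _ < 1 := by rw [one_mul]; exact hc₁lt
    -- pointwise estimate
    have hpt : ∀ r ∈ Set.Ioo (0:ℝ) 1,
        ‖-((deriv g (r * c₁) - deriv g (-(r * c₁))) * ↑c₂ * Complex.exp (-s * ↑μ * ↑c₂ * ↑r)) -
            s * ↑μ * ↑c₁ * (g (r * c₁) - g (-(r * c₁))) * Complex.exp (-s * ↑μ * ↑c₂ * ↑r)‖ ^ 2
        ≤ 4 * c₂ ^ 2 * (‖deriv g (r * c₁)‖ ^ 2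
              + ‖deriv g (-(r * c₁))‖ ^ 2)
          + (4 * μ ^ 2 * b ^ 3 * AS ^ 2 * I) * (r * Real.exp (-(2 * a * r))) := by
      intro r hr
      obtain ⟨hr0, hr1⟩ := hr
      set E := Complex.exp (-s * ↑μ * ↑c₂ * ↑r) with hE
      have hEabs : ‖E‖ = Real.exp (-(a * r)) := by
        have hre : (-s * ↑μ * ↑c₂ * ↑r).re = -(s.re * (μ * c₂) * r) := by
          have h1 : -s * (μ:ℂ) * (c₂:ℂ) * (r:ℂ) = ((μ * c₂ * r : ℝ) : ℂ) * (-s) := by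
            push_cast; ring
          rw [h1, Complex.re_ofReal_mul, Complex.neg_re]; ring
        rw [hE, Complex.norm_exp, hre, hadef]
      have hAE0 : 0 ≤ ‖E‖ := norm_nonneg _
      have hEle : ‖E‖ ≤ 1 := by
        rw [hEabs]
        have : 0 ≤ a * r := by positivity
        calc Real.exp (-(a * r)) ≤ Real.exp 0 := Real.exp_le_exp.2 (by linarith)
          _ = 1 := Real.exp_zero
      have hE2 : ‖E‖ ^ 2 = Real.exp (-(2 * a * r)) := by
        rw [hEabs, pow_two, ← Real.exp_add]
        congr 1
        ring
      have hrb0 : 0 < r * b := by positivity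
      have hrb1 : r * b < 1 := by
        calc r * b ≤ 1 * b := mul_le_mul_of_nonneg_right hr1.le hb.le
          _ < 1 := by rw [one_mul]; exact hb1
      -- FTC + Cauchy-Schwarz bound for the jump of g
      have hG : ‖g (r * c₁) - g (-(r * c₁))‖ ^ 2 ≤ (r * b - -(r * b)) * I := by
        rw [hIdef]
        rcases lt_or_gt_of_ne hc0 with hneg | hpos
        · have hb' : b = -c₁ := abs_of_neg hneg
          have h1 : r * c₁ = -(r * b) := by rw [hb']; ring
          have h2 : -(r * c₁) = r * b := by rw [hb']; ring
          rw [h2, h1, ← norm_neg, neg_sub]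
          exact ftc_cs hg (by linarith) (by linarith) (by linarith)
        · have hb' : b = c₁ := abs_of_pos hpos
          have h1 : r * c₁ = r * b := by rw [hb']
          rw [h1]
          exact ftc_cs hg (by linarith) (by linarith) (by linarith)
      clear_value E
      set A1 := ‖deriv g (r * c₁)‖ with hA1
      set A2 := ‖deriv g (-(r * c₁))‖ with hA2
      set AG := ‖g (r * c₁) - g (-(r * c₁))‖ with hAG
      have hA1n : 0 ≤ A1 := norm_nonneg _
      have hA2n : 0 ≤ A2 := norm_nonneg _
      have hAGn : 0 ≤ AG := norm_nonneg _
      -- triangle inequality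
      have htri : ‖-((deriv g (r * c₁) - deriv g (-(r * c₁))) * ↑c₂ * E) -
            s * ↑μ * ↑c₁ * (g (r * c₁) - g (-(r * c₁))) * E‖
          ≤ (A1 + A2) * c₂ * ‖E‖ + AS * μ * b * AG * ‖E‖ := by
        have hD : ‖deriv g (r * c₁) - deriv g (-(r * c₁))‖ ≤ A1 + A2 := by
          simpa [hA1, hA2] using
            norm_sub_le (deriv g (r * c₁)) (deriv g (-(r * c₁)))
        have step1 : ‖-((deriv g (r * c₁) - deriv g (-(r * c₁))) * ↑c₂ * E) -
              s * ↑μ * ↑c₁ * (g (r * c₁) - g (-(r * c₁))) * E‖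
            ≤ ‖(deriv g (r * c₁) - deriv g (-(r * c₁))) * ↑c₂ * E‖
              + ‖s * ↑μ * ↑c₁ * (g (r * c₁) - g (-(r * c₁))) * E‖ := by
          have heq : -((deriv g (r * c₁) - deriv g (-(r * c₁))) * ↑c₂ * E) -
              s * ↑μ * ↑c₁ * (g (r * c₁) - g (-(r * c₁))) * E
              = -(((deriv g (r * c₁) - deriv g (-(r * c₁))) * ↑c₂ * E)
                + (s * ↑μ * ↑c₁ * (g (r * c₁) - g (-(r * c₁))) * E)) := by ring
          rw [heq, norm_neg]
          exact norm_add_le _ _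
        have e1 : ‖(deriv g (r * c₁) - deriv g (-(r * c₁))) * ↑c₂ * E‖
            ≤ (A1 + A2) * c₂ * ‖E‖ := by
          rw [norm_mul, norm_mul, Complex.norm_real, Real.norm_of_nonneg hc₂.le]
          exact mul_le_mul_of_nonneg_right (mul_le_mul_of_nonneg_right hD hc₂.le) hAE0
        have e2 : ‖s * ↑μ * ↑c₁ * (g (r * c₁) - g (-(r * c₁))) * E‖
            = AS * μ * b * AG * ‖E‖ := by
          rw [hASdef, hbdef, norm_mul, norm_mul, norm_mul, norm_mul, Complex.norm_real,
            Complex.norm_real, Real.norm_of_nonneg hμ.le, Real.norm_eq_abs]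
        exact le_trans step1 (add_le_add e1 (le_of_eq e2))
      have hsq : ‖-((deriv g (r * c₁) - deriv g (-(r * c₁))) * ↑c₂ * E) -
            s * ↑μ * ↑c₁ * (g (r * c₁) - g (-(r * c₁))) * E‖ ^ 2
          ≤ 2 * ((A1 + A2) * c₂ * ‖E‖) ^ 2
            + 2 * (AS * μ * b * AG * ‖E‖) ^ 2 := by
        exact sq_add_bound (norm_nonneg _) htri
      have hAE2le1 : ‖E‖ ^ 2 ≤ 1 := pow_le_one₀ hAE0 hEle
      have T1 : ((A1 + A2) * c₂ * ‖E‖) ^ 2 ≤ 2 * c₂ ^ 2 * (A1 ^ 2 + A2 ^ 2) := by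
        have h1 : (A1 + A2) ^ 2 ≤ 2 * (A1 ^ 2 + A2 ^ 2) := add_sq_le_two
        calc ((A1 + A2) * c₂ * ‖E‖) ^ 2
            = ((A1 + A2) ^ 2 * ‖E‖ ^ 2) * c₂ ^ 2 := by ring
          _ ≤ (2 * (A1 ^ 2 + A2 ^ 2) * 1) * c₂ ^ 2 := by
              apply mul_le_mul_of_nonneg_right _ (sq_nonneg c₂)
              exact mul_le_mul h1 hAE2le1 (sq_nonneg _) (by positivity)
          _ = 2 * c₂ ^ 2 * (A1 ^ 2 + A2 ^ 2) := by ring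
      have T2 : (AS * μ * b * AG * ‖E‖) ^ 2
          ≤ (2 * μ ^ 2 * b ^ 3 * AS ^ 2 * I) * (r * Real.exp (-(2 * a * r))) := by
        have hGle : AG ^ 2 ≤ 2 * (r * b) * I := by
          have : r * b - -(r * b) = 2 * (r * b) := by ring
          rw [← this]; exact hG
        calc (AS * μ * b * AG * ‖E‖) ^ 2
            = (AS ^ 2 * μ ^ 2 * b ^ 2) * (AG ^ 2 * ‖E‖ ^ 2) := by ring
          _ ≤ (AS ^ 2 * μ ^ 2 * b ^ 2) * ((2 * (r * b) * I) * Real.exp (-(2 * a * r))) := by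
              apply mul_le_mul_of_nonneg_left _ (by positivity)
              rw [hE2]
              exact mul_le_mul_of_nonneg_right hGle (Real.exp_pos _).le
          _ = (2 * μ ^ 2 * b ^ 3 * AS ^ 2 * I) * (r * Real.exp (-(2 * a * r))) := by ring
      refine le_trans hsq ?_
      linarith [T1, T2]
    -- integrability of the majorant
    have hvol01 : volume (Set.Ioo (0:ℝ) 1) < ⊤ := by
      rw [Real.volume_Ioo]; exact ENNReal.ofReal_lt_top
    have hcont1 : ContinuousOn (fun r : ℝ => ‖deriv g (r * c₁)‖ ^ 2)
        (Set.Ioo (0:ℝ) 1) := by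
      apply ContinuousOn.pow
      apply continuous_norm.comp_continuousOn
      apply (deriv_cont_aux hg).comp ((continuous_id.mul continuous_const).continuousOn)
      intro r hr
      exact Set.mem_Ioo.2 (abs_lt.1 (hmap r hr))
    have hcont2 : ContinuousOn (fun r : ℝ => ‖deriv g (-(r * c₁))‖ ^ 2)
        (Set.Ioo (0:ℝ) 1) := by
      apply ContinuousOn.pow
      apply continuous_norm.comp_continuousOn
      apply (deriv_cont_aux hg).comp ((continuous_id.mul continuous_const).neg.continuousOn)
      intro r hr
      have := hmap r hr
      rw [← abs_neg] at this
      exact Set.mem_Ioo.2 (abs_lt.1 this)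
    have hP_int : IntegrableOn (fun r : ℝ => ‖deriv g (r * c₁)‖ ^ 2)
        (Set.Ioo (0:ℝ) 1) := by
      refine integrableOn_of_bdd measurableSet_Ioo hvol01
        (hcont1.aestronglyMeasurable measurableSet_Ioo) (M := M ^ 2) fun r hr => ?_
      have h1 : ‖deriv g (r * c₁)‖ ≤ M := by
        exact hM _ (Set.mem_Ioo.2 (abs_lt.1 (hmap r hr)))
      rw [_root_.abs_of_nonneg (by positivity)]
      exact pow_le_pow_left₀ (norm_nonneg _) h1 2
    have hQ_int : IntegrableOn (fun r : ℝ => ‖deriv g (-(r * c₁))‖ ^ 2)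
        (Set.Ioo (0:ℝ) 1) := by
      refine integrableOn_of_bdd measurableSet_Ioo hvol01
        (hcont2.aestronglyMeasurable measurableSet_Ioo) (M := M ^ 2) fun r hr => ?_
      have habs' : |(-(r * c₁))| < 1 := by rw [abs_neg]; exact hmap r hr
      have h1 : ‖deriv g (-(r * c₁))‖ ≤ M := by
        exact hM _ (Set.mem_Ioo.2 (abs_lt.1 habs'))
      rw [_root_.abs_of_nonneg (by positivity)]
      exact pow_le_pow_left₀ (norm_nonneg _) h1 2
    have hf2_int : IntegrableOn (fun r : ℝ => r * Real.exp (-(2 * a * r)))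
        (Set.Ioo (0:ℝ) 1) :=
      ((continuous_id.mul (((continuous_const.mul continuous_id).neg).rexp)).integrableOn_Icc).mono_set
        Set.Ioo_subset_Icc_self
    have hsum_int : IntegrableOn (fun r : ℝ =>
        4 * c₂ ^ 2 * (‖deriv g (r * c₁)‖ ^ 2
            + ‖deriv g (-(r * c₁))‖ ^ 2)) (Set.Ioo (0:ℝ) 1) := by
      exact (hP_int.add hQ_int).const_mul _
    have hcoef_int : IntegrableOn (fun r : ℝ =>
        (4 * μ ^ 2 * b ^ 3 * AS ^ 2 * I) * (r * Real.exp (-(2 * a * r))))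
        (Set.Ioo (0:ℝ) 1) := by
      exact hf2_int.const_mul _
    have hψ_int : IntegrableOn (fun r : ℝ =>
        4 * c₂ ^ 2 * (‖deriv g (r * c₁)‖ ^ 2
            + ‖deriv g (-(r * c₁))‖ ^ 2)
          + (4 * μ ^ 2 * b ^ 3 * AS ^ 2 * I) * (r * Real.exp (-(2 * a * r))))
        (Set.Ioo (0:ℝ) 1) := by
      exact hsum_int.add hcoef_int
    -- main integral comparison
    have hstep1 : (∫ r in Set.Ioo (0 : ℝ) 1,
        ‖-((deriv g (r * c₁) - deriv g (-(r * c₁))) * ↑c₂ * Complex.exp (-s * ↑μ * ↑c₂ * ↑r)) -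
            s * ↑μ * ↑c₁ * (g (r * c₁) - g (-(r * c₁))) * Complex.exp (-s * ↑μ * ↑c₂ * ↑r)‖ ^ 2)
        ≤ ∫ r in Set.Ioo (0:ℝ) 1,
            (4 * c₂ ^ 2 * (‖deriv g (r * c₁)‖ ^ 2
                + ‖deriv g (-(r * c₁))‖ ^ 2)
              + (4 * μ ^ 2 * b ^ 3 * AS ^ 2 * I) * (r * Real.exp (-(2 * a * r)))) := by
      refine integral_mono_of_nonneg (ae_of_all _ fun r => by positivity) hψ_int ?_
      exact (ae_restrict_iff' measurableSet_Ioo).2 (ae_of_all _ hpt)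
    have hsplit : ∫ r in Set.Ioo (0:ℝ) 1,
        (4 * c₂ ^ 2 * (‖deriv g (r * c₁)‖ ^ 2
            + ‖deriv g (-(r * c₁))‖ ^ 2)
          + (4 * μ ^ 2 * b ^ 3 * AS ^ 2 * I) * (r * Real.exp (-(2 * a * r))))
        = 4 * c₂ ^ 2 * ((∫ r in Set.Ioo (0:ℝ) 1, ‖deriv g (r * c₁)‖ ^ 2)
            + ∫ r in Set.Ioo (0:ℝ) 1, ‖deriv g (-(r * c₁))‖ ^ 2)
          + (4 * μ ^ 2 * b ^ 3 * AS ^ 2 * I)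
            * ∫ r in Set.Ioo (0:ℝ) 1, r * Real.exp (-(2 * a * r)) := by
      rw [integral_add hsum_int hcoef_int, integral_const_mul, integral_const_mul,
        integral_add hP_int hQ_int]
    -- change of variables bounds
    have hcovP : (∫ r in Set.Ioo (0:ℝ) 1, ‖deriv g (r * c₁)‖ ^ 2)
        ≤ (1 / b) * I := by
      rw [hIdef, hbdef]
      exact cov_aux (F := fun τ => ‖deriv g τ‖ ^ 2) (fun x => by positivity)
        (integrable_sq_aux hg) hc0 (by rw [← hbdef]; exact hc₁lt)
    have hcovQ : (∫ r in Set.Ioo (0:ℝ) 1, ‖deriv g (-(r * c₁))‖ ^ 2)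
        ≤ (1 / b) * I := by
      have heq : (∫ r in Set.Ioo (0:ℝ) 1, ‖deriv g (-(r * c₁))‖ ^ 2)
          = ∫ r in Set.Ioo (0:ℝ) 1, ‖deriv g (r * (-c₁))‖ ^ 2 := by
        apply setIntegral_congr_fun measurableSet_Ioo
        intro r _
        simp only [mul_neg]
      rw [heq, hIdef, hbdef]
      have := cov_aux (F := fun τ => ‖deriv g τ‖ ^ 2) (fun x => by positivity)
        (integrable_sq_aux hg) (neg_ne_zero.2 hc0)
        (by rw [abs_neg, ← hbdef]; exact hc₁lt)
      rwa [abs_neg] at this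
    have hexp : (∫ r in Set.Ioo (0:ℝ) 1, r * Real.exp (-(2 * a * r))) ≤ 1 / (4 * a ^ 2) :=
      exp_int_aux ha
    -- final arithmetic
    have hAS2 : AS ^ 2 * Real.sin δ ^ 2 ≤ s.re ^ 2 := by
      have h := mul_self_le_mul_self (by positivity : (0:ℝ) ≤ AS * Real.sin δ) habs_le
      calc AS ^ 2 * Real.sin δ ^ 2 = (AS * Real.sin δ) * (AS * Real.sin δ) := by ring
        _ ≤ s.re * s.re := h
        _ = s.re ^ 2 := by ring
    have hsecond : (4 * μ ^ 2 * b ^ 3 * AS ^ 2 * I) * (1 / (4 * a ^ 2))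
        ≤ (b ^ 3 / (Real.sin δ ^ 2 * c₂ ^ 2)) * I := by
      have ha' : a ≠ 0 := ne_of_gt ha
      have h₁ : (4 * μ ^ 2 * b ^ 3 * AS ^ 2 * I) * (1 / (4 * a ^ 2))
          = (b ^ 3 * I) * (μ ^ 2 * AS ^ 2 / a ^ 2) := by
        field_simp
      have h₂ : (b ^ 3 / (Real.sin δ ^ 2 * c₂ ^ 2)) * I
          = (b ^ 3 * I) * (1 / (Real.sin δ ^ 2 * c₂ ^ 2)) := by ring
      rw [h₁, h₂]
      refine mul_le_mul_of_nonneg_left ?_ (by positivity : (0:ℝ) ≤ b ^ 3 * I)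
      rw [div_le_div_iff₀ (by positivity) (by positivity)]
      calc μ ^ 2 * AS ^ 2 * (Real.sin δ ^ 2 * c₂ ^ 2)
          = (AS ^ 2 * Real.sin δ ^ 2) * (μ ^ 2 * c₂ ^ 2) := by ring
        _ ≤ s.re ^ 2 * (μ ^ 2 * c₂ ^ 2) := mul_le_mul_of_nonneg_right hAS2 (by positivity)
        _ = 1 * a ^ 2 := by rw [hadef]; ring
    calc (∫ r in Set.Ioo (0 : ℝ) 1,
        ‖-((deriv g (r * c₁) - deriv g (-(r * c₁))) * ↑c₂ * Complex.exp (-s * ↑μ * ↑c₂ * ↑r)) -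
            s * ↑μ * ↑c₁ * (g (r * c₁) - g (-(r * c₁))) * Complex.exp (-s * ↑μ * ↑c₂ * ↑r)‖ ^ 2)
        ≤ 4 * c₂ ^ 2 * ((∫ r in Set.Ioo (0:ℝ) 1, ‖deriv g (r * c₁)‖ ^ 2)
            + ∫ r in Set.Ioo (0:ℝ) 1, ‖deriv g (-(r * c₁))‖ ^ 2)
          + (4 * μ ^ 2 * b ^ 3 * AS ^ 2 * I)
            * ∫ r in Set.Ioo (0:ℝ) 1, r * Real.exp (-(2 * a * r)) := by
          rw [← hsplit]; exact hstep1
      _ ≤ 4 * c₂ ^ 2 * ((1 / b) * I + (1 / b) * I)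
          + (4 * μ ^ 2 * b ^ 3 * AS ^ 2 * I) * (1 / (4 * a ^ 2)) := by
          refine add_le_add (mul_le_mul_of_nonneg_left (add_le_add hcovP hcovQ)
            (by positivity)) (mul_le_mul_of_nonneg_left hexp (by positivity))
      _ ≤ (8 * c₂ ^ 2 / b) * I + (b ^ 3 / (Real.sin δ ^ 2 * c₂ ^ 2)) * I := by
          refine add_le_add (le_of_eq ?_) hsecond
          field_simp
          ring
      _ = (8 * c₂ ^ 2 / b + b ^ 3 / (Real.sin δ ^ 2 * c₂ ^ 2)) * I := by ring
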